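/- Residual collinearity and sign for the shifted Lanczos/CG iterate: Let A be an n×n Hermitian complex matrix, c ∈ ℂ^n nonzero, and let (V_m, T_m, β_m, v_{m+1}) be a Lanczos relation of length m for A with starting vector v_1 = c/‖c‖. Let σ ∈ ℝ be such that T_m − σI is invertible, and define the Galerkin iterate x_m = V_m y where (T_m − σI) y = ‖c‖ e_1. Then the residual satisfies c − (A − σI) x_m = ρ_m v_{m+1} with ρ_m = −β_m ‖c‖ (e_m* (T_m − σI)^{-1} e_1); in particular the residual is a scalar multiple of the next Lanczos vector v_{m+1}. If moreover σ is strictly smaller than every eigenvalue of T_m, then ρ_m = (−1)^m ‖c − (A − σI) x_m‖, i.e. ρ_m has sign (−1)^m. -/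

import Mathlib

open Matrix

/-- A Lanczos relation of length `k` for an `n × n` Hermitian matrix `A` over `𝕜`
with starting unit vector `v`: orthonormal columns `V` with first column `v`, a real
symmetric tridiagonal matrix `T` with positive subdiagonal, `β > 0` and a unit vector
`vNext` orthogonal to the columns of `V`, such that `A V = V T + β vNext eₖ*`. -/
structure LanczosRelation (𝕜 : Type) [RCLike 𝕜] (n k : ℕ)
    (A : Matrix (Fin n) (Fin n) 𝕜) (v : Fin n → 𝕜) where
  kpos : 0 < k
  V : Matrix (Fin n) (Fin k) 𝕜
  T : Matrix (Fin k) (Fin k) ℝ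
  β : ℝ
  vNext : Fin n → 𝕜
  orthonormal : Vᴴ * V = 1
  firstCol : (fun i => V i ⟨0, kpos⟩) = v
  symm : T.IsHermitian
  tridiag : ∀ i j : Fin k, (i : ℕ) + 1 < (j : ℕ) → T i j = 0
  subdiag_pos : ∀ (i : ℕ) (h : i + 1 < k), 0 < T ⟨i + 1, h⟩ ⟨i, by omega⟩
  β_pos : 0 < β
  vNext_unit : star vNext ⬝ᵥ vNext = 1
  vNext_orth : Vᴴ *ᵥ vNext = 0
  relation : A * V = V * T.map (algebraMap ℝ 𝕜) +
      (algebraMap ℝ 𝕜 β) • vecMulVec vNext (Pi.single ⟨k - 1, by omega⟩ 1)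

/-- The Euclidean norm of a complex vector. -/
noncomputable def euclidEnorm {n : ℕ} (c : Fin n → ℂ) : ℝ :=
  Real.sqrt (Complex.re (star c ⬝ᵥ c))

lemma euclidEnorm_pos {n : ℕ} {c : Fin n → ℂ} (hc : c ≠ 0) : 0 < euclidEnorm c := by
  have h : Complex.re (star c ⬝ᵥ c) = ∑ i, Complex.normSq (c i) := by
    simp [dotProduct, Complex.re_sum, Complex.normSq_apply]
  rw [show euclidEnorm c = Real.sqrt (Complex.re (star c ⬝ᵥ c)) from rfl, h]
  apply Real.sqrt_pos.mpr
  obtain ⟨i, hi⟩ := Function.ne_iff.mp hc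
  exact Finset.sum_pos' (fun j _ => Complex.normSq_nonneg _)
    ⟨i, Finset.mem_univ i, by simpa using Complex.normSq_pos.mpr hi⟩

lemma euclidEnorm_real_smul {n : ℕ} (v : Fin n → ℂ) (hv : star v ⬝ᵥ v = 1) (ρ : ℝ) :
    euclidEnorm ((ρ:ℂ) • v) = |ρ| := by
  have h : star ((ρ:ℂ) • v) ⬝ᵥ ((ρ:ℂ) • v) = ((ρ*ρ : ℝ) : ℂ) := by
    rw [star_smul, smul_dotProduct, dotProduct_smul, hv]
    push_cast
    simp [Complex.conj_ofReal]
  rw [show euclidEnorm ((ρ:ℂ) • v) = Real.sqrt (Complex.re (star ((ρ:ℂ) • v) ⬝ᵥ ((ρ:ℂ) • v))) from rfl,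
    h, Complex.ofReal_re, ← Real.sqrt_mul_self_eq_abs]

lemma det_update_aux (k : ℕ) (B : Matrix (Fin (k+1)) (Fin (k+1)) ℝ)
    (hlow : ∀ i j : Fin k, j < i → B i.succ j.castSucc = 0) :
    (B.updateCol (Fin.last k) (Pi.single 0 1)).det
      = (-1)^k * ∏ i : Fin k, B i.succ i.castSucc := by
  rw [det_succ_column _ (Fin.last k)]
  rw [Finset.sum_eq_single_of_mem 0 (Finset.mem_univ _)]
  · set M : Matrix (Fin k) (Fin k) ℝ := Matrix.of fun (i j : Fin k) => B i.succ j.castSucc with hM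
    have hsub : ((B.updateCol (Fin.last k) (Pi.single 0 1)).submatrix
        (Fin.succAbove 0) (Fin.succAbove (Fin.last k))) = M := by
      ext i j
      rw [hM, Matrix.of_apply, submatrix_apply, Fin.succAbove_last, Fin.succAbove_zero,
        updateCol_apply, if_neg (Fin.castSucc_lt_last j).ne]
    rw [hsub]
    have htri : M.BlockTriangular id := fun i j h => hlow i j h
    rw [Matrix.det_of_upperTriangular htri]
    simp [updateCol_self, hM]
  · intro i _ hi
    simp [updateCol_self, Pi.single_apply, hi]

lemma det_shift_pos (k : ℕ) (T : Matrix (Fin (k+1)) (Fin (k+1)) ℝ) (hT : T.IsHermitian) (σ : ℝ)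
    (hσ : ∀ i, σ < hT.eigenvalues i) : 0 < (T - σ • 1).det := by
  set U : Matrix (Fin (k+1)) (Fin (k+1)) ℝ :=
    (hT.eigenvectorUnitary : Matrix (Fin (k+1)) (Fin (k+1)) ℝ) with hUdef
  have hU : U * star U = 1 := (Matrix.mem_unitaryGroup_iff).mp hT.eigenvectorUnitary.2
  have key : T - σ • 1 = U * (diagonal (fun i => hT.eigenvalues i - σ)) * star U := by
    have h1 : (diagonal (fun i => hT.eigenvalues i - σ) : Matrix (Fin (k+1)) (Fin (k+1)) ℝ)
        = diagonal (RCLike.ofReal ∘ hT.eigenvalues) - σ • 1 := by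
      rw [smul_one_eq_diagonal, ← diagonal_sub]
      rfl
    rw [h1, Matrix.mul_sub, Matrix.sub_mul,
      ← (show T = U * diagonal (RCLike.ofReal ∘ hT.eigenvalues) * star U from hT.spectral_theorem)]
    congr 1
    rw [Matrix.mul_smul, Matrix.mul_one, Matrix.smul_mul, hU]
  have hU' : star U * U = 1 := (Matrix.mem_unitaryGroup_iff').mp hT.eigenvectorUnitary.2
  rw [key, det_mul, det_mul, mul_comm, ← mul_assoc, ← det_mul, hU', det_one, one_mul, det_diagonal]
  exact Finset.prod_pos fun i _ => sub_pos.mpr (hσ i)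

theorem shifted_lanczos_residual_collinearity
    {n m : ℕ} {A : Matrix (Fin n) (Fin n) ℂ} (hA : A.IsHermitian)
    {c : Fin n → ℂ} (hc : c ≠ 0)
    (L : LanczosRelation ℂ n m A ((euclidEnorm c)⁻¹ • c))
    (σ : ℝ) (hinv : IsUnit (L.T - σ • (1 : Matrix (Fin m) (Fin m) ℝ)))
    (y : Fin m → ℝ)
    (hy : (L.T - σ • (1 : Matrix (Fin m) (Fin m) ℝ)) *ᵥ y
        = euclidEnorm c • (Pi.single (⟨0, L.kpos⟩ : Fin m) 1 : Fin m → ℝ))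
    (x : Fin n → ℂ) (hx : x = L.V *ᵥ (fun i => ((y i : ℝ) : ℂ)))
    (ρ : ℝ)
    (hρ : ρ = -L.β * euclidEnorm c *
        ((L.T - σ • (1 : Matrix (Fin m) (Fin m) ℝ))⁻¹
          ⟨m - 1, by have := L.kpos; omega⟩ ⟨0, L.kpos⟩)) :
    c - (A - (σ : ℂ) • 1) *ᵥ x = (ρ : ℂ) • L.vNext ∧
    ((∀ i, σ < L.symm.eigenvalues i) →
      ρ = (-1) ^ m * euclidEnorm (c - (A - (σ : ℂ) • 1) *ᵥ x)) := by
  obtain ⟨k, rfl⟩ : ∃ k, m = k + 1 := ⟨m - 1, by have := L.kpos; omega⟩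
  have hncpos : 0 < euclidEnorm c := euclidEnorm_pos hc
  set B := L.T - σ • (1 : Matrix (Fin (k+1)) (Fin (k+1)) ℝ) with hB
  have hBdet : IsUnit B.det := (Matrix.isUnit_iff_isUnit_det B).mp hinv
  -- normalized versions of the hypotheses (definitional index changes)
  have hy' : B *ᵥ y = euclidEnorm c • (Pi.single (0 : Fin (k+1)) 1 : Fin (k+1) → ℝ) := hy
  have hρ'' : ρ = -L.β * euclidEnorm c * (B⁻¹ (Fin.last k) 0) := hρ
  have hrel : A * L.V = L.V * L.T.map (algebraMap ℝ ℂ) +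
      (algebraMap ℝ ℂ L.β) • vecMulVec L.vNext (Pi.single (Fin.last k) 1) := L.relation
  have hfc : (fun i => L.V i 0) = (euclidEnorm c)⁻¹ • c := L.firstCol
  -- `y (last)` in terms of the inverse
  have hyl : y (Fin.last k) = euclidEnorm c * B⁻¹ (Fin.last k) 0 := by
    have h1 : B⁻¹ *ᵥ (B *ᵥ y) = y := by
      rw [mulVec_mulVec, Matrix.nonsing_inv_mul _ hBdet, one_mulVec]
    rw [hy', mulVec_smul, mulVec_single] at h1
    have := congrFun h1 (Fin.last k)
    simpa [mul_comm] using this.symm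
  have hρ' : ρ = -L.β * y (Fin.last k) := by rw [hρ'', hyl]; ring
  set yc : Fin (k+1) → ℂ := fun i => ((y i : ℝ) : ℂ) with hyc
  -- key matrix identity
  have hBmapC : B.map (algebraMap ℝ ℂ) = L.T.map (algebraMap ℝ ℂ) - (σ:ℂ) • 1 := by
    ext i j
    by_cases h : i = j <;>
      simp [hB, Matrix.map_apply, Matrix.one_apply, h]
  have key : (A - (σ:ℂ) • 1) * L.V = L.V * B.map (algebraMap ℝ ℂ) +
      (algebraMap ℝ ℂ L.β) • vecMulVec L.vNext (Pi.single (Fin.last k) 1) := by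
    rw [hBmapC, Matrix.mul_sub, Matrix.mul_smul, Matrix.mul_one, Matrix.sub_mul, hrel,
      Matrix.smul_mul, Matrix.one_mul]
    abel
  -- part 1
  have piece1 : (L.V * B.map (algebraMap ℝ ℂ)) *ᵥ yc = c := by
    rw [← mulVec_mulVec]
    have h2 : B.map (algebraMap ℝ ℂ) *ᵥ yc
        = ((euclidEnorm c : ℂ)) • (Pi.single (0 : Fin (k+1)) 1 : Fin (k+1) → ℂ) := by
      funext i
      have h3 : (B.map (algebraMap ℝ ℂ) *ᵥ yc) i = (((B *ᵥ y) i : ℝ) : ℂ) := by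
        simp only [Matrix.mulVec, dotProduct, Matrix.map_apply, hyc]
        push_cast
        rfl
      rw [h3, hy']
      by_cases hi : i = 0 <;> simp [hi, Pi.single_apply]
    rw [h2, mulVec_smul, mulVec_single]
    have h4 : (fun i => L.V i 0 * 1) = fun i => (((euclidEnorm c)⁻¹ : ℝ) : ℂ) * c i := by
      funext i
      rw [mul_one]
      have := congrFun hfc i
      simpa [Complex.real_smul] using this
    rw [show (MulOpposite.op (1:ℂ) • L.V.col 0) = fun i => L.V i 0 * 1 from by funext i; simp, h4]
    funext i
    simp only [Pi.smul_apply, smul_eq_mul]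
    rw [← mul_assoc, ← Complex.ofReal_mul, mul_inv_cancel₀ (ne_of_gt hncpos)]
    simp
  have piece2 : ((algebraMap ℝ ℂ L.β) • vecMulVec L.vNext (Pi.single (Fin.last k) 1)) *ᵥ yc
      = ((L.β : ℂ) * yc (Fin.last k)) • L.vNext := by
    funext i
    simp [Matrix.mulVec, dotProduct, vecMulVec_apply, Pi.single_apply, mul_ite,
      Finset.sum_ite_eq', Complex.real_smul]
    ring
  have hres : c - (A - (σ:ℂ) • 1) *ᵥ x = (ρ : ℂ) • L.vNext := by
    rw [hx, mulVec_mulVec, key, add_mulVec, piece1, piece2]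
    have h5 : (ρ : ℂ) = -((L.β : ℂ) * yc (Fin.last k)) := by
      rw [hρ']
      push_cast
      ring
    rw [sub_add_cancel_left, h5, neg_smul]
  refine ⟨hres, fun hσ => ?_⟩
  rw [hres, euclidEnorm_real_smul L.vNext L.vNext_unit]
  -- sign analysis
  have hdet : 0 < B.det := det_shift_pos k L.T L.symm σ hσ
  have hlow : ∀ i j : Fin k, j < i → B i.succ j.castSucc = 0 := by
    intro i j h
    have hji : (j : ℕ) < (i : ℕ) := h
    have hne : (i.succ : Fin (k+1)) ≠ j.castSucc := by
      intro hcontra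
      have : (i : ℕ) + 1 = (j : ℕ) := congrArg Fin.val hcontra
      omega
    have hT0 : L.T i.succ j.castSucc = 0 := by
      have hsy : L.T i.succ j.castSucc = L.T j.castSucc i.succ := by
        have := congrFun (congrFun L.symm i.succ) j.castSucc
        simpa [Matrix.conjTranspose_apply] using this.symm
      rw [hsy]
      exact L.tridiag _ _ (by simp only [Fin.val_succ, Fin.coe_castSucc]; omega)
    simp [hB, Matrix.sub_apply, Matrix.one_apply, hne, hT0]
  have hPpos : 0 < ∏ i : Fin k, B i.succ i.castSucc := by
    apply Finset.prod_pos
    intro i _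
    have hne : (i.succ : Fin (k+1)) ≠ i.castSucc := by
      intro hcontra
      have : (i : ℕ) + 1 = (i : ℕ) := congrArg Fin.val hcontra
      omega
    have hdiag : B i.succ i.castSucc = L.T i.succ i.castSucc := by
      simp [hB, Matrix.sub_apply, Matrix.one_apply, hne]
    rw [hdiag]
    exact L.subdiag_pos i (by omega)
  -- Cramer's rule
  have hcr : B.det * y (Fin.last k)
      = euclidEnorm c * ((-1)^k * ∏ i : Fin k, B i.succ i.castSucc) := by
    have h1 : Matrix.cramer B (B *ᵥ y) = B.det • y := by
      rw [cramer_eq_adjugate_mulVec, mulVec_mulVec, Matrix.adjugate_mul,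
        smul_mulVec, one_mulVec]
    rw [hy', LinearMap.map_smul] at h1
    have h2 := congrFun h1 (Fin.last k)
    simp only [Pi.smul_apply, smul_eq_mul, cramer_apply] at h2
    rw [det_update_aux k B hlow] at h2
    rw [← h2]
  have hylval : y (Fin.last k)
      = euclidEnorm c * ((-1)^k * ∏ i : Fin k, B i.succ i.castSucc) / B.det := by
    rw [eq_div_iff (ne_of_gt hdet)]
    linear_combination hcr
  have hkey : (-1:ℝ)^(k+1) * ρ
      = L.β * euclidEnorm c * (∏ i : Fin k, B i.succ i.castSucc) / B.det := by
    rw [hρ', hylval, pow_succ]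
    rcases neg_one_pow_eq_or ℝ k with h | h <;> rw [h] <;> field_simp <;> ring
  have hsignpos : 0 < (-1:ℝ)^(k+1) * ρ := by
    rw [hkey]
    apply div_pos _ hdet
    have := L.β_pos
    positivity
  have habs : |ρ| = (-1:ℝ)^(k+1) * ρ := by
    rcases neg_one_pow_eq_or ℝ (k+1) with h | h <;> rw [h] at hsignpos ⊢
    · rw [one_mul] at hsignpos ⊢
      exact abs_of_pos hsignpos
    · rw [neg_one_mul] at hsignpos ⊢
      exact abs_of_neg (by linarith)
  rw [habs]
  rcases neg_one_pow_eq_or ℝ (k+1) with h | h <;> rw [h] <;> ring
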